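/- If n ≥ 3 is even and m ≥ 3, then Kₙ × K_m is type I, i.e., χ''(Kₙ × K_m) = (n−1)(m−1) + 1. -/

import Mathlib

open SimpleGraph

variable {V : Type*} {W : Type*}

/-- The direct (tensor) product of two simple graphs. -/
def tensorProd (G : SimpleGraph V) (H : SimpleGraph W) : SimpleGraph (V × W) where
  Adj a b := G.Adj a.1 b.1 ∧ H.Adj a.2 b.2
  symm := ⟨fun _ _ h => ⟨G.adj_symm h.1, H.adj_symm h.2⟩⟩
  loopless := ⟨fun a h => G.loopless.irrefl a.1 h.1⟩

instance tensorProd.adjDecidable (G : SimpleGraph V) (H : SimpleGraph W)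
    [DecidableRel G.Adj] [DecidableRel H.Adj] : DecidableRel (tensorProd G H).Adj :=
  fun _ _ => instDecidableAnd

/-- A proper edge colouring with `n` colours, given as a symmetric function on adjacent pairs. -/
def IsEdgeColoring (G : SimpleGraph V) (n : ℕ) (ce : V → V → Fin n) : Prop :=
  (∀ u v, G.Adj u v → ce u v = ce v u) ∧
  (∀ u v w, G.Adj u v → G.Adj u w → v ≠ w → ce u v ≠ ce u w)

/-- A proper total colouring with `n` colours. -/
def IsTotalColoring (G : SimpleGraph V) (n : ℕ) (cv : V → Fin n) (ce : V → V → Fin n) : Prop :=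
  (∀ u v, G.Adj u v → ce u v = ce v u) ∧
  (∀ u v, G.Adj u v → cv u ≠ cv v) ∧
  (∀ u v w, G.Adj u v → G.Adj u w → v ≠ w → ce u v ≠ ce u w) ∧
  (∀ u v, G.Adj u v → ce u v ≠ cv u ∧ ce u v ≠ cv v)

/-- The total chromatic number of a graph. -/
noncomputable def totalChromaticNumber (G : SimpleGraph V) : ℕ :=
  sInf {n | ∃ cv ce, IsTotalColoring G n cv ce}

/-- Adjacency of the crown graph. -/
def crownAdj {m : ℕ} : Fin m ⊕ Fin m → Fin m ⊕ Fin m → Prop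
  | Sum.inl k, Sum.inr t => k ≠ t
  | Sum.inr k, Sum.inl t => k ≠ t
  | _, _ => False

/-- The crown graph `J_{2m}`: `K_{m,m}` minus a perfect matching. -/
def crown (m : ℕ) : SimpleGraph (Fin m ⊕ Fin m) where
  Adj := crownAdj
  symm := by constructor; rintro (k|k) (t|t) h <;> simp only [crownAdj] at * <;> exact fun e => h e.symm
  loopless := by constructor; rintro (k|k) h <;> simp only [crownAdj] at h

instance crown.adjDecidable (m : ℕ) : DecidableRel (crown m).Adj := fun a b =>
  match a, b with
  | Sum.inl k, Sum.inr t => (inferInstance : Decidable (k ≠ t))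
  | Sum.inr k, Sum.inl t => (inferInstance : Decidable (k ≠ t))
  | Sum.inl _, Sum.inl _ => isFalse (fun h => h)
  | Sum.inr _, Sum.inr _ => isFalse (fun h => h)

namespace KnKmAux

lemma mulw2 {v w : ℕ} (hv : 1 < v) (hw : 2 * w % v = 1) (z : ℕ) :
    z * (2 * w) % v = z % v := by
  have hw' : 2 * w ≡ 1 [MOD v] := by
    show 2 * w % v = 1 % v
    rw [hw, Nat.mod_eq_of_lt hv]
  have := Nat.ModEq.mul_left z hw'
  simpa [Nat.ModEq] using this

lemma cancel_w {v w : ℕ} (hv : 1 < v) (hw : 2 * w % v = 1) {x y : ℕ}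
    (h : x * w % v = y * w % v) : x % v = y % v := by
  have h2 : x * w * 2 % v = y * w * 2 % v := Nat.ModEq.mul_right 2 h
  have e : ∀ z : ℕ, z * w * 2 = z * (2 * w) := fun z => by ring
  rw [e, e] at h2
  rw [mulw2 hv hw, mulw2 hv hw] at h2
  exact h2

lemma add_left_cancel_mod {v c x y : ℕ} (hx : x < v) (hy : y < v)
    (h : (c + x) % v = (c + y) % v) : x = y := by
  have h2 : x ≡ y [MOD v] := Nat.ModEq.add_left_cancel' c h
  rwa [Nat.ModEq, Nat.mod_eq_of_lt hx, Nat.mod_eq_of_lt hy] at h2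

lemma add_right_cancel_mod {v c x y : ℕ} (hx : x < v) (hy : y < v)
    (h : (x + c) % v = (y + c) % v) : x = y := by
  have h2 : x ≡ y [MOD v] := Nat.ModEq.add_right_cancel' c h
  rwa [Nat.ModEq, Nat.mod_eq_of_lt hx, Nat.mod_eq_of_lt hy] at h2

lemma cancel_w_add {v w c x y : ℕ} (hv : 1 < v) (hw : 2 * w % v = 1)
    (hx : x < v) (hy : y < v) (h : (c + x) * w % v = (c + y) * w % v) : x = y :=
  add_left_cancel_mod hx hy (cancel_w hv hw h)

lemma cancel_w_add_right {v w c x y : ℕ} (hv : 1 < v) (hw : 2 * w % v = 1)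
    (hx : x < v) (hy : y < v) (h : (x + c) * w % v = (y + c) * w % v) : x = y :=
  add_right_cancel_mod hx hy (cancel_w hv hw h)

lemma cancel_two {v w x y : ℕ} (hv : 1 < v) (hw : 2 * w % v = 1)
    (hx : x < v) (hy : y < v) (h : 2 * x % v = 2 * y % v) : x = y := by
  have h2 : 2 * x * w % v = 2 * y * w % v := Nat.ModEq.mul_right w h
  have e : ∀ z : ℕ, 2 * z * w = z * (2 * w) := fun z => by ring
  rw [e, e] at h2
  rw [mulw2 hv hw, mulw2 hv hw] at h2
  rwa [Nat.mod_eq_of_lt hx, Nat.mod_eq_of_lt hy] at h2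

lemma double_w {v w x : ℕ} (hv : 1 < v) (hw : 2 * w % v = 1) (hx : x < v) :
    (x + x) * w % v = x := by
  have e : (x + x) * w = x * (2 * w) := by ring
  rw [e, mulw2 hv hw, Nat.mod_eq_of_lt hx]

lemma special_detect {v w k x : ℕ} (hv : 1 < v) (hw : 2 * w % v = 1)
    (hx : x < v) (h : (2 * k + 1) * w % v = (k + x) * w % v) : x = (k + 1) % v := by
  have h2 := cancel_w hv hw h
  have e : 2 * k + 1 = k + (k + 1) := by ring
  rw [e] at h2
  have h3 : (k + 1) ≡ x [MOD v] := Nat.ModEq.add_left_cancel' k h2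
  rw [Nat.ModEq, Nat.mod_eq_of_lt hx] at h3
  exact h3.symm

lemma inf_row_detect {m w k t : ℕ} (hv : 1 < m - 1) (hw : 2 * w % (m - 1) = 1)
    (hm4 : 4 ≤ m) (hk : k < m - 1) (ht : t < m - 1)
    (h : (2 * t + (m - 2)) * w % (m - 1) = (k + t) * w % (m - 1)) :
    t = (k + 1) % (m - 1) := by
  have h2 := cancel_w hv hw h
  have e : 2 * t + (m - 2) = t + (t + (m - 2)) := by omega
  have e2 : k + t = t + k := by omega
  rw [e, e2] at h2
  have h3 : (t + (m - 2)) ≡ k [MOD m - 1] := Nat.ModEq.add_left_cancel' t h2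
  rw [Nat.ModEq, Nat.mod_eq_of_lt hk] at h3
  have h4 : (k + 1) % (m - 1) = ((t + (m - 2)) % (m - 1) + 1) % (m - 1) := by rw [h3]
  rw [Nat.mod_add_mod] at h4
  have e3 : t + (m - 2) + 1 = t + (m - 1) := by omega
  rw [e3, Nat.add_mod_right, Nat.mod_eq_of_lt ht] at h4
  exact h4.symm

structure IdemLS (m : ℕ) where
  L : Fin m → Fin m → Fin m
  rowInj : ∀ k, Function.Injective (L k)
  colInj : ∀ t, Function.Injective (fun k => L k t)
  diag : ∀ k, L k k = k

def mkOdd (m : ℕ) (hm : 3 ≤ m) (ho : m % 2 = 1) : IdemLS m :=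
  have hv : 1 < m := by omega
  have hw : 2 * ((m + 1) / 2) % m = 1 := by
    have h1 : 2 * ((m + 1) / 2) = m + 1 := by omega
    rw [h1]
    calc (m + 1) % m = (m * 1 + 1) % m := by ring_nf
      _ = 1 % m := Nat.mul_add_mod m 1 1
      _ = 1 := Nat.mod_eq_of_lt hv
  { L := fun k t => ⟨(k.val + t.val) * ((m + 1) / 2) % m, Nat.mod_lt _ k.pos⟩
    rowInj := fun k t t' h =>
      Fin.ext (cancel_w_add hv hw t.isLt t'.isLt (congrArg Fin.val h))
    colInj := fun t k k' h => by
      have h2 := congrArg Fin.val h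
      simp only at h2
      rw [Nat.add_comm k.val t.val, Nat.add_comm k'.val t.val] at h2
      exact Fin.ext (cancel_w_add hv hw k.isLt k'.isLt h2)
    diag := fun k => Fin.ext (double_w hv hw k.isLt) }

def evL (m : ℕ) (hm : 4 ≤ m) (k t : Fin m) : Fin m :=
  if k.val = m - 1 then
    if t.val = m - 1 then ⟨m - 1, by omega⟩
    else ⟨(2 * t.val + (m - 2)) * (m / 2) % (m - 1),
      Nat.lt_of_lt_of_le (Nat.mod_lt _ (by omega)) (by omega)⟩
  else if t.val = m - 1 then
    ⟨(2 * k.val + 1) * (m / 2) % (m - 1),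
      Nat.lt_of_lt_of_le (Nat.mod_lt _ (by omega)) (by omega)⟩
  else if t.val = (k.val + 1) % (m - 1) then ⟨m - 1, by omega⟩
  else ⟨(k.val + t.val) * (m / 2) % (m - 1),
      Nat.lt_of_lt_of_le (Nat.mod_lt _ (by omega)) (by omega)⟩

lemma ev_hw (m : ℕ) (hm4 : 4 ≤ m) (he : m % 2 = 0) : 2 * (m / 2) % (m - 1) = 1 := by
  have h1 : 2 * (m / 2) = m := by omega
  rw [h1, Nat.mod_eq_sub_mod (by omega : m - 1 ≤ m)]
  have h2 : m - (m - 1) = 1 := by omega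
  rw [h2]
  exact Nat.mod_eq_of_lt (by omega)

def mkEven (m : ℕ) (hm4 : 4 ≤ m) (he : m % 2 = 0) : IdemLS m where
  L := evL m hm4
  rowInj k := by
    have hv : 1 < m - 1 := by omega
    have hw := ev_hw m hm4 he
    have hmod : ∀ x : ℕ, x * (m / 2) % (m - 1) < m - 1 := fun x => Nat.mod_lt _ (by omega)
    intro t t' h
    unfold evL at h
    split_ifs at h with h1 h2 h3 h2 h3 h4 h5 h4 h5 h6 h7 h6 h7
    all_goals (try exact Fin.ext (by omega))
    · exact absurd (congrArg Fin.val h).symm (by have := hmod (2 * t'.val + (m - 2)); simp; omega)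
    · exact absurd (congrArg Fin.val h) (by have := hmod (2 * t.val + (m - 2)); simp; omega)
    · have hval : (2 * t.val + (m - 2)) * (m / 2) % (m - 1)
          = (2 * t'.val + (m - 2)) * (m / 2) % (m - 1) := congrArg Fin.val h
      have h5 := cancel_w hv hw hval
      have h6 : 2 * t.val ≡ 2 * t'.val [MOD m - 1] := Nat.ModEq.add_right_cancel' (m - 2) h5
      exact Fin.ext (cancel_two hv hw (by omega) (by omega) h6)
    · -- t = ∞, t' special : value vs ∞
      exact absurd (congrArg Fin.val h) (by have := hmod (2 * k.val + 1); simp; omega)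
    · -- t = ∞, t' generic
      exact absurd (special_detect hv hw (by omega) (congrArg Fin.val h)) h5
    · -- t special, t' = ∞
      exact absurd (congrArg Fin.val h).symm (by have := hmod (2 * k.val + 1); simp; omega)
    · -- t special, t' generic
      exact absurd (congrArg Fin.val h).symm (by have := hmod (k.val + t'.val); simp; omega)
    · -- t generic, t' = ∞
      exact absurd (special_detect hv hw (by omega) (congrArg Fin.val h).symm) h4
    · -- t generic, t' special
      exact absurd (congrArg Fin.val h) (by have := hmod (k.val + t.val); simp; omega)
    · -- generic generic
      exact Fin.ext (cancel_w_add hv hw (by omega) (by omega) (congrArg Fin.val h))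
  colInj t := by
    have hv : 1 < m - 1 := by omega
    have hw := ev_hw m hm4 he
    have hmod : ∀ x : ℕ, x * (m / 2) % (m - 1) < m - 1 := fun x => Nat.mod_lt _ (by omega)
    intro k k' h
    simp only at h
    unfold evL at h
    split_ifs at h with h1 h2 h3 h4 h3 h4 h5 h2 h3 h4 h3 h4 h5
    all_goals (try exact Fin.ext (by omega))
    · exact absurd (congrArg Fin.val h).symm (by have := hmod (2 * k'.val + 1); simp; omega)
    · exact absurd (congrArg Fin.val h) (by have := hmod (2 * t.val + (m - 2)); simp; omega)
    · exact absurd (inf_row_detect hv hw hm4 (by omega) (by omega) (congrArg Fin.val h)) h3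
    · exact absurd (congrArg Fin.val h) (by have := hmod (2 * k.val + 1); simp; omega)
    · have h6 := cancel_w hv hw (congrArg Fin.val h)
      have h7 : (2 * k.val + 1) % (m-1) = (2 * k'.val + 1) % (m-1) := by
        have e : ∀ z : ℕ, 2 * z + 1 = 2 * z + 1 := fun _ => rfl
        exact h6
      have h8 : (2 * k.val) ≡ (2 * k'.val) [MOD m - 1] := Nat.ModEq.add_right_cancel' 1 h7
      exact Fin.ext (cancel_two hv hw (by omega) (by omega) h8)
    · exact absurd (congrArg Fin.val h).symm (by have := hmod (2 * t.val + (m - 2)); simp; omega)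
    · -- both special
      have h6 : (k.val + 1) % (m - 1) = (k'.val + 1) % (m - 1) := by rw [← h2, ← h4]
      have h7 : k.val ≡ k'.val [MOD m - 1] := Nat.ModEq.add_right_cancel' 1 h6
      have h8 : k.val = k'.val := by
        rwa [Nat.ModEq, Nat.mod_eq_of_lt (by omega), Nat.mod_eq_of_lt (by omega)] at h7
      exact Fin.ext h8
    · exact absurd (congrArg Fin.val h).symm (by have := hmod (k'.val + t.val); simp; omega)
    · exact absurd (inf_row_detect hv hw hm4 (by omega) (by omega) (congrArg Fin.val h).symm) h2
    · exact absurd (congrArg Fin.val h) (by have := hmod (k.val + t.val); simp; omega)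
    · exact Fin.ext (cancel_w_add_right hv hw (by omega) (by omega) (congrArg Fin.val h))

  diag k := by
    have hv : 1 < m - 1 := by omega
    have hw := ev_hw m hm4 he
    unfold evL
    split_ifs with h1 h2
    · apply Fin.ext
      show m - 1 = k.val
      omega
    · -- k finite but k = (k+1) % (m-1) : contradiction
      exfalso
      by_cases hc : k.val + 1 = m - 1
      · rw [hc, Nat.mod_self] at h2
        omega
      · rw [Nat.mod_eq_of_lt (by omega)] at h2
        omega
    · exact Fin.ext (double_w hv hw (by omega))

section ColorDefs

/-- numeric value of the colour `(r,s)`; `0` is the star colour -/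
def colv (m r : ℕ) (s : Fin m) : ℕ :=
  if s.val = 0 then 0 else 1 + r * (m - 1) + (s.val - 1)

def col (n m : ℕ) (r : ℕ) (s : Fin m) : Fin ((n - 1) * (m - 1) + 1) :=
  ⟨colv m r s % ((n - 1) * (m - 1) + 1), Nat.mod_lt _ (Nat.succ_pos _)⟩

variable {n m : ℕ}

lemma colv_lt (hn : 3 ≤ n) (hm : 3 ≤ m) {r : ℕ} (hr : r < n - 1) (s : Fin m) :
    colv m r s < (n - 1) * (m - 1) + 1 := by
  unfold colv
  split_ifs with hs
  · positivity
  · have h1 : r * (m - 1) ≤ (n - 2) * (m - 1) := Nat.mul_le_mul_right _ (by omega)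
    have h2 : s.val - 1 ≤ m - 2 := by have := s.isLt; omega
    have h3 : (n - 2) * (m - 1) + (m - 1) = (n - 1) * (m - 1) := by
      have e : n - 1 = (n - 2) + 1 := by omega
      rw [e, Nat.succ_mul]
    omega

lemma col_val (hn : 3 ≤ n) (hm : 3 ≤ m) {r : ℕ} (hr : r < n - 1) (s : Fin m) :
    (col n m r s).val = colv m r s :=
  Nat.mod_eq_of_lt (colv_lt hn hm hr s)

lemma col_inj_s (hn : 3 ≤ n) (hm : 3 ≤ m) {r : ℕ} (hr : r < n - 1) {s s' : Fin m}
    (h : col n m r s = col n m r s') : s = s' := by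
  have hv := congrArg Fin.val h
  rw [col_val hn hm hr, col_val hn hm hr] at hv
  unfold colv at hv
  split_ifs at hv <;> (apply Fin.ext; omega)

lemma col_val_zero_iff (hn : 3 ≤ n) (hm : 3 ≤ m) {r : ℕ} (hr : r < n - 1) (s : Fin m) :
    (col n m r s).val = 0 ↔ s.val = 0 := by
  rw [col_val hn hm hr]
  unfold colv
  split_ifs with hs
  · simp [hs]
  · constructor <;> (intro hh; omega)

lemma col_ne_of_zero (hn : 3 ≤ n) (hm : 3 ≤ m) {r r' : ℕ} (hr : r < n - 1) (hr' : r' < n - 1)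
    {s s' : Fin m} (hs : s.val = 0) (hs' : s'.val ≠ 0) : col n m r s ≠ col n m r' s' := by
  intro h
  have h1 := congrArg Fin.val h
  rw [col_val hn hm hr, col_val hn hm hr'] at h1
  unfold colv at h1
  rw [if_pos hs, if_neg hs'] at h1
  omega

lemma col_ne_r (hn : 3 ≤ n) (hm : 3 ≤ m) {r r' : ℕ} (hr : r < n - 1) (hr' : r' < n - 1)
    (hrr : r ≠ r') {s s' : Fin m} (hs : s.val ≠ 0) (hs' : s'.val ≠ 0) :
    col n m r s ≠ col n m r' s' := by
  intro h
  have hv := congrArg Fin.val h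
  rw [col_val hn hm hr, col_val hn hm hr'] at hv
  unfold colv at hv
  rw [if_neg hs, if_neg hs'] at hv
  have hb : s.val - 1 < m - 1 := by have := s.isLt; omega
  have hb' : s'.val - 1 < m - 1 := by have := s'.isLt; omega
  have h2 : r * (m - 1) + (s.val - 1) = r' * (m - 1) + (s'.val - 1) := by omega
  have hbb : s.val - 1 = s'.val - 1 := by
    have h2' : (s.val - 1) + r * (m - 1) = (s'.val - 1) + r' * (m - 1) := by omega
    have h3 : ((s.val - 1) + r * (m - 1)) % (m - 1)
        = ((s'.val - 1) + r' * (m - 1)) % (m - 1) := by rw [h2']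
    rwa [Nat.add_mul_mod_self_right, Nat.add_mul_mod_self_right,
      Nat.mod_eq_of_lt hb, Nat.mod_eq_of_lt hb'] at h3
  have h4 : r * (m - 1) = r' * (m - 1) := by omega
  exact hrr (Nat.eq_of_mul_eq_mul_right (by omega) h4)

end ColorDefs

section DifDefs

def dif (m : ℕ) (a b : Fin m) : Fin m := ⟨(a.val + (m - b.val)) % m, Nat.mod_lt _ a.pos⟩

variable {m : ℕ}

lemma dif_val_ne_zero {a b : Fin m} (h : a ≠ b) : (dif m a b).val ≠ 0 := by
  intro h0
  have hd : m ∣ a.val + (m - b.val) := Nat.dvd_of_mod_eq_zero h0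
  obtain ⟨c, hc⟩ := hd
  have ha := a.isLt
  have hb := b.isLt
  have hc2 : c < 2 := by
    by_contra hcc
    have h2 : m * 2 ≤ m * c := Nat.mul_le_mul_left m (by omega)
    omega
  have hcc : c = 0 ∨ c = 1 := by omega
  rcases hcc with rfl | rfl
  · omega
  · exact h (Fin.ext (by omega))

lemma dif_right {k t t' : Fin m} (h : dif m k t = dif m k t') : t = t' := by
  have hv := congrArg Fin.val h
  have h2 : (m - t.val) ≡ (m - t'.val) [MOD m] := Nat.ModEq.add_left_cancel' k.val hv
  have ht := t.isLt; have ht' := t'.isLt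
  by_cases h0 : t.val = 0
  · by_cases h0' : t'.val = 0
    · exact Fin.ext (by omega)
    · exfalso
      rw [Nat.ModEq, h0, Nat.sub_zero, Nat.mod_self, Nat.mod_eq_of_lt (by omega)] at h2
      omega
  · by_cases h0' : t'.val = 0
    · exfalso
      rw [Nat.ModEq, h0', Nat.sub_zero, Nat.mod_self, Nat.mod_eq_of_lt (by omega)] at h2
      omega
    · rw [Nat.ModEq, Nat.mod_eq_of_lt (by omega), Nat.mod_eq_of_lt (by omega)] at h2
      exact Fin.ext (by omega)

lemma dif_left {k k' t : Fin m} (h : dif m k t = dif m k' t) : k = k' := by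
  have hv := congrArg Fin.val h
  exact Fin.ext (add_right_cancel_mod k.isLt k'.isLt hv)

end DifDefs

section RowClasses

/-- The 1-factorisation class of the row pair `{i,j}` of `K_n` (`n` even). -/
def Rcl (n : ℕ) (i j : Fin n) : ℕ :=
  (if i.val = n - 1 then j.val
   else if j.val = n - 1 then i.val
   else (i.val + j.val) * (n / 2)) % (n - 1)

variable {n : ℕ}

lemma Rcl_lt (hn : 3 ≤ n) (i j : Fin n) : Rcl n i j < n - 1 :=
  Nat.mod_lt _ (by omega)

lemma Rcl_symm {i j : Fin n} (hij : i ≠ j) : Rcl n i j = Rcl n j i := by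
  unfold Rcl
  congr 1
  by_cases h1 : i.val = n - 1
  · by_cases h2 : j.val = n - 1
    · exact absurd (Fin.ext (h1.trans h2.symm)) hij
    · rw [if_pos h1, if_neg h2, if_pos h1]
  · by_cases h2 : j.val = n - 1
    · rw [if_neg h1, if_pos h2, if_pos h2]
    · rw [if_neg h1, if_neg h2, if_neg h2, if_neg h1, Nat.add_comm]

lemma Rcl_partner (hn : 3 ≤ n) (hne : Even n) {i j j' : Fin n} (hj : j ≠ i) (hj' : j' ≠ i)
    (h : Rcl n i j = Rcl n i j') : j = j' := by
  have hv : 1 < n - 1 := by omega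
  have hne' : n % 2 = 0 := Nat.even_iff.mp hne
  have hw : 2 * (n / 2) % (n - 1) = 1 := ev_hw n (by omega) hne'
  unfold Rcl at h
  by_cases h1 : i.val = n - 1
  · rw [if_pos h1, if_pos h1] at h
    have hjv : j.val < n - 1 := by
      have hlt := j.isLt; by_contra hc; exact hj (Fin.ext (by omega))
    have hj'v : j'.val < n - 1 := by
      have hlt := j'.isLt; by_contra hc; exact hj' (Fin.ext (by omega))
    exact Fin.ext (by rwa [Nat.mod_eq_of_lt hjv, Nat.mod_eq_of_lt hj'v] at h)
  · have hiv : i.val < n - 1 := by have := i.isLt; omega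
    by_cases h2 : j.val = n - 1
    · by_cases h3 : j'.val = n - 1
      · exact Fin.ext (h2.trans h3.symm)
      · rw [if_neg h1, if_pos h2, if_neg h1, if_neg h3] at h
        exfalso
        have h4 : i.val * 2 % (n - 1) = ((i.val + j'.val) * (n / 2) * 2) % (n - 1) :=
          Nat.ModEq.mul_right 2 h
        have e : (i.val + j'.val) * (n / 2) * 2 = (i.val + j'.val) * (2 * (n / 2)) := by ring
        rw [e, mulw2 hv hw] at h4
        have e2 : i.val * 2 = i.val + i.val := by ring
        rw [e2] at h4
        have hj'v : j'.val < n - 1 := by have := j'.isLt; omega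
        have h5 := add_left_cancel_mod hiv hj'v h4
        exact hj' (Fin.ext h5.symm)
    · by_cases h3 : j'.val = n - 1
      · rw [if_neg h1, if_neg h2, if_neg h1, if_pos h3] at h
        exfalso
        have h4 : ((i.val + j.val) * (n / 2) * 2) % (n - 1) = i.val * 2 % (n - 1) :=
          Nat.ModEq.mul_right 2 h
        have e : (i.val + j.val) * (n / 2) * 2 = (i.val + j.val) * (2 * (n / 2)) := by ring
        rw [e, mulw2 hv hw] at h4
        have e2 : i.val * 2 = i.val + i.val := by ring
        rw [e2] at h4
        have hjv : j.val < n - 1 := by have := j.isLt; omega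
        have h5 := add_left_cancel_mod hjv hiv h4
        exact hj (Fin.ext h5)
      · rw [if_neg h1, if_neg h2, if_neg h1, if_neg h3] at h
        have hjv : j.val < n - 1 := by have := j.isLt; omega
        have hj'v : j'.val < n - 1 := by have := j'.isLt; omega
        exact Fin.ext (cancel_w_add hv hw hjv hj'v h)

end RowClasses

section Coloring

def Ecol (n m : ℕ) (S : IdemLS m) (r : ℕ) (a b : Fin m) : Fin ((n - 1) * (m - 1) + 1) :=
  if r = 0 then col n m 0 (S.L a b) else col n m r (dif m a b)

def cvF (n m : ℕ) (x : Fin n × Fin m) : Fin ((n - 1) * (m - 1) + 1) := col n m 0 x.2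

def ceF (n m : ℕ) (S : IdemLS m) (u v : Fin n × Fin m) : Fin ((n - 1) * (m - 1) + 1) :=
  if u.1.val < v.1.val then Ecol n m S (Rcl n u.1 v.1) u.2 v.2
  else Ecol n m S (Rcl n u.1 v.1) v.2 u.2

variable {n m : ℕ}

lemma Ecol_ne_col0 (hn : 3 ≤ n) (hm : 3 ≤ m) (S : IdemLS m) {r : ℕ} (hr : r < n - 1)
    {a b : Fin m} (hab : a ≠ b) (c : Fin m) (hc : c = a ∨ c = b) :
    Ecol n m S r a b ≠ col n m 0 c := by
  have h0n : (0 : ℕ) < n - 1 := by omega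
  unfold Ecol
  split_ifs with h0
  · intro h
    have hLab := col_inj_s hn hm h0n h
    rcases hc with rfl | rfl
    · have h2 : S.L c b = S.L c c := by rw [hLab, S.diag]
      exact hab ((S.rowInj c h2).symm)
    · have h2 : (fun z => S.L z c) a = (fun z => S.L z c) c := by
        simpa [S.diag] using hLab
      exact hab (S.colInj c h2)
  · by_cases hc0 : c.val = 0
    · exact (col_ne_of_zero hn hm h0n hr hc0 (dif_val_ne_zero hab)).symm
    · exact col_ne_r hn hm hr h0n h0 (dif_val_ne_zero hab) hc0

lemma Ecol_ne_of_r_ne (hn : 3 ≤ n) (hm : 3 ≤ m) (S : IdemLS m) {r r' : ℕ}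
    (hr : r < n - 1) (hr' : r' < n - 1) (hrr : r ≠ r') {a b a' b' : Fin m}
    (hab : a ≠ b) (hab' : a' ≠ b') : Ecol n m S r a b ≠ Ecol n m S r' a' b' := by
  have h0n : (0 : ℕ) < n - 1 := by omega
  unfold Ecol
  split_ifs with h0 h0'
  · exact absurd (h0.trans h0'.symm) hrr
  · by_cases hz : (S.L a b).val = 0
    · exact col_ne_of_zero hn hm h0n hr' hz (dif_val_ne_zero hab')
    · exact col_ne_r hn hm h0n hr' (by omega) hz (dif_val_ne_zero hab')
  · by_cases hz : (S.L a' b').val = 0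
    · exact (col_ne_of_zero hn hm h0n hr hz (dif_val_ne_zero hab)).symm
    · exact (col_ne_r hn hm h0n hr (by omega) hz (dif_val_ne_zero hab)).symm
  · exact col_ne_r hn hm hr hr' hrr (dif_val_ne_zero hab) (dif_val_ne_zero hab')

end Coloring

end KnKmAux

section MainProof

open KnKmAux

variable {n m : ℕ}

lemma adj_iff {u v : Fin n × Fin m} :
    (tensorProd (⊤ : SimpleGraph (Fin n)) (⊤ : SimpleGraph (Fin m))).Adj u v ↔
      u.1 ≠ v.1 ∧ u.2 ≠ v.2 := by
  simp [tensorProd]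

lemma main_coloring (hn : 3 ≤ n) (hne : Even n) (hm : 3 ≤ m) (S : IdemLS m) :
    IsTotalColoring (tensorProd (⊤ : SimpleGraph (Fin n)) (⊤ : SimpleGraph (Fin m)))
      ((n - 1) * (m - 1) + 1) (cvF n m) (ceF n m S) := by
  have h0n : (0 : ℕ) < n - 1 := by omega
  refine ⟨?_, ?_, ?_, ?_⟩
  · -- symmetry
    rintro ⟨i, k⟩ ⟨j, t⟩ h
    obtain ⟨hij, hkt⟩ := adj_iff.mp h
    have hvne : i.val ≠ j.val := fun hh => hij (Fin.ext hh)
    unfold ceF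
    simp only
    rcases Nat.lt_or_ge i.val j.val with hlt | hge
    · rw [if_pos hlt, if_neg (by omega), Rcl_symm hij]
    · rw [if_neg (by omega), if_pos (by omega : j.val < i.val), Rcl_symm hij]
  · -- vertex colours
    rintro ⟨i, k⟩ ⟨j, t⟩ h
    obtain ⟨hij, hkt⟩ := adj_iff.mp h
    intro hc
    exact hkt (col_inj_s hn hm h0n hc)
  · -- edge colours at a common vertex
    rintro ⟨i, k⟩ ⟨j, t⟩ ⟨j', t'⟩ huv huw hvw
    obtain ⟨hij, hkt⟩ := adj_iff.mp huv
    obtain ⟨hij', hkt'⟩ := adj_iff.mp huw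
    by_cases hjj : j = j'
    · have htt : t ≠ t' := fun hh => hvw (by rw [hjj, hh])
      subst hjj
      unfold ceF
      simp only
      have hvne : i.val ≠ j.val := fun hh => hij (Fin.ext hh)
      rcases Nat.lt_or_ge i.val j.val with hlt | hge
      · rw [if_pos hlt, if_pos hlt]
        unfold Ecol
        split_ifs with h0
        · intro heq
          exact htt (S.rowInj k (col_inj_s hn hm h0n heq))
        · intro heq
          exact htt (dif_right (col_inj_s hn hm (Rcl_lt hn i j) heq))
      · rw [if_neg (by omega), if_neg (by omega)]
        unfold Ecol
        split_ifs with h0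
        · intro heq
          have h2 : (fun z => S.L z k) t = (fun z => S.L z k) t' :=
            col_inj_s hn hm h0n heq
          exact htt (S.colInj k h2)
        · intro heq
          exact htt (dif_left (col_inj_s hn hm (Rcl_lt hn i j) heq))
    · have hrr : Rcl n i j ≠ Rcl n i j' :=
        fun hh => hjj (Rcl_partner hn hne hij.symm hij'.symm hh)
      unfold ceF
      simp only
      split_ifs with ho1 ho2 ho2
      · exact Ecol_ne_of_r_ne hn hm S (Rcl_lt hn i j) (Rcl_lt hn i j') hrr hkt hkt'
      · exact Ecol_ne_of_r_ne hn hm S (Rcl_lt hn i j) (Rcl_lt hn i j') hrr hkt (Ne.symm hkt')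
      · exact Ecol_ne_of_r_ne hn hm S (Rcl_lt hn i j) (Rcl_lt hn i j') hrr (Ne.symm hkt) hkt'
      · exact Ecol_ne_of_r_ne hn hm S (Rcl_lt hn i j) (Rcl_lt hn i j') hrr (Ne.symm hkt) (Ne.symm hkt')
  · -- edge colour differs from endpoint colours
    rintro ⟨i, k⟩ ⟨j, t⟩ h
    obtain ⟨hij, hkt⟩ := adj_iff.mp h
    unfold ceF cvF
    simp only
    split_ifs with ho
    · exact ⟨Ecol_ne_col0 hn hm S (Rcl_lt hn i j) hkt k (Or.inl rfl),
        Ecol_ne_col0 hn hm S (Rcl_lt hn i j) hkt t (Or.inr rfl)⟩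
    · exact ⟨Ecol_ne_col0 hn hm S (Rcl_lt hn i j) (Ne.symm hkt) k (Or.inr rfl),
        Ecol_ne_col0 hn hm S (Rcl_lt hn i j) (Ne.symm hkt) t (Or.inl rfl)⟩

def x0 (n m : ℕ) (hn : 3 ≤ n) (hm : 3 ≤ m) : Fin n × Fin m :=
  (⟨0, by omega⟩, ⟨0, by omega⟩)

def iotaF (n m : ℕ) (hn : 3 ≤ n) (hm : 3 ≤ m) (c : Fin ((n - 1) * (m - 1) + 1)) :
    Fin n × Fin m :=
  (⟨(c.val - 1) / (m - 1) + 1, by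
      have hp : 0 < (n - 1) * (m - 1) := Nat.mul_pos (by omega) (by omega)
      have h1 : c.val - 1 < (n - 1) * (m - 1) := by have := c.isLt; omega
      have h2 : (c.val - 1) / (m - 1) < n - 1 :=
        (Nat.div_lt_iff_lt_mul (by omega : 0 < m - 1)).mpr h1
      exact lt_of_lt_of_le (Nat.succ_lt_succ h2) (by omega)⟩,
   ⟨(c.val - 1) % (m - 1) + 1, by
      have h2 := Nat.mod_lt (c.val - 1) (by omega : 0 < m - 1)
      exact lt_of_lt_of_le (Nat.succ_lt_succ h2) (by omega)⟩)

lemma lower_bound (hn : 3 ≤ n) (hm : 3 ≤ m) {N' : ℕ}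
    (cv' : Fin n × Fin m → Fin N') (ce' : Fin n × Fin m → Fin n × Fin m → Fin N')
    (h : IsTotalColoring (tensorProd (⊤ : SimpleGraph (Fin n)) (⊤ : SimpleGraph (Fin m)))
      N' cv' ce') : (n - 1) * (m - 1) + 1 ≤ N' := by
  have hadj : ∀ c : Fin ((n - 1) * (m - 1) + 1),
      (tensorProd (⊤ : SimpleGraph (Fin n)) (⊤ : SimpleGraph (Fin m))).Adj
        (x0 n m hn hm) (iotaF n m hn hm c) := by
    intro c
    refine adj_iff.mpr ⟨?_, ?_⟩
    · intro hh
      have h2 : (0 : ℕ) = (c.val - 1) / (m - 1) + 1 := congrArg Fin.val hh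
      exact Nat.succ_ne_zero _ h2.symm
    · intro hh
      have h2 : (0 : ℕ) = (c.val - 1) % (m - 1) + 1 := congrArg Fin.val hh
      exact Nat.succ_ne_zero _ h2.symm
  have hι_inj : ∀ c c' : Fin ((n - 1) * (m - 1) + 1), c.val ≠ 0 → c'.val ≠ 0 →
      iotaF n m hn hm c = iotaF n m hn hm c' → c = c' := by
    intro c c' hc hc' hi
    have h1 : (c.val - 1) / (m - 1) + 1 = (c'.val - 1) / (m - 1) + 1 :=
      congrArg (fun p => (p.1 : Fin n).val) hi
    have h2 : (c.val - 1) % (m - 1) + 1 = (c'.val - 1) % (m - 1) + 1 :=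
      congrArg (fun p => (p.2 : Fin m).val) hi
    have hq : (c.val - 1) / (m - 1) = (c'.val - 1) / (m - 1) := Nat.add_right_cancel h1
    have hr : (c.val - 1) % (m - 1) = (c'.val - 1) % (m - 1) := Nat.add_right_cancel h2
    have d1 := Nat.div_add_mod (c.val - 1) (m - 1)
    have d2 := Nat.div_add_mod (c'.val - 1) (m - 1)
    have e : c.val - 1 = c'.val - 1 := by rw [← d1, ← d2, hq, hr]
    exact Fin.ext (by omega)
  have hfinj : Function.Injective (fun c : Fin ((n - 1) * (m - 1) + 1) =>
      if c.val = 0 then cv' (x0 n m hn hm) else ce' (x0 n m hn hm) (iotaF n m hn hm c)) := by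
    intro c c' heq
    simp only at heq
    by_cases hc : c.val = 0 <;> by_cases hc' : c'.val = 0
    · exact Fin.ext (by omega)
    · rw [if_pos hc, if_neg hc'] at heq
      exact absurd heq.symm (h.2.2.2 (x0 n m hn hm) (iotaF n m hn hm c') (hadj c')).1
    · rw [if_neg hc, if_pos hc'] at heq
      exact absurd heq (h.2.2.2 (x0 n m hn hm) (iotaF n m hn hm c) (hadj c)).1
    · rw [if_neg hc, if_neg hc'] at heq
      by_contra hne
      exact h.2.2.1 (x0 n m hn hm) (iotaF n m hn hm c) (iotaF n m hn hm c') (hadj c)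
        (hadj c') (fun hh => hne (hι_inj c c' hc hc' hh)) heq
  calc (n - 1) * (m - 1) + 1 = Fintype.card (Fin ((n - 1) * (m - 1) + 1)) :=
        (Fintype.card_fin _).symm
    _ ≤ Fintype.card (Fin N') := Fintype.card_le_of_injective _ hfinj
    _ = N' := Fintype.card_fin _

end MainProof

theorem Kn_tensor_Km_typeI_even_left (n m : ℕ) (hn : 3 ≤ n) (hne : Even n) (hm : 3 ≤ m) :
    totalChromaticNumber (tensorProd (⊤ : SimpleGraph (Fin n)) (⊤ : SimpleGraph (Fin m))) =
      (n - 1) * (m - 1) + 1 := by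
  have hm2 := Nat.even_or_odd m
  have S : KnKmAux.IdemLS m :=
    if h : m % 2 = 1 then KnKmAux.mkOdd m hm h
    else KnKmAux.mkEven m (by omega) (by omega)
  have hmem : (n - 1) * (m - 1) + 1 ∈
      {N | ∃ cv ce, IsTotalColoring
        (tensorProd (⊤ : SimpleGraph (Fin n)) (⊤ : SimpleGraph (Fin m))) N cv ce} :=
    ⟨KnKmAux.cvF n m, KnKmAux.ceF n m S, main_coloring hn hne hm S⟩
  unfold totalChromaticNumber
  apply le_antisymm
  · exact Nat.sInf_le hmem
  · obtain ⟨cv', ce', hcol⟩ := Nat.sInf_mem ⟨_, hmem⟩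
    exact lower_bound hn hm cv' ce' hcol
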